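/- Let d ≥ K ≥ 2, n ≥ 1, λ_W > 0, λ_H > 0, and set c := K√(nλ_H λ_W). Consider g(W,H,b) := (1/(2Kn))‖WH + b·1_Nᵀ − Y‖_F² + (λ_W/2)‖W‖_F² + (λ_H/2)‖H‖_F² over W ∈ ℝ^{K×d}, H ∈ ℝ^{d×Kn}, b ∈ ℝ^K, with N = Kn. If c ≤ 1, then any global minimizer (W*, H*, b*) satisfies: (i) b* = (1/K)·1_K; (ii) h*_{k,1} = … = h*_{k,n} =: h*_k for every k ∈ [K]; (iii) the global feature mean h*_G := (1/K)·Σ_{k=1}^K h*_k equals 0; (iv) ‖h*_1‖₂² = … = ‖h*_K‖₂² = ρ := ((1−c)(K−1)/K)·√(λ_W/(nλ_H)); (v) [h*_1,…,h*_K]ᵀ[h*_1,…,h*_K] = ρ·(K/(K−1))·(I_K − (1/K)·1_K·1_Kᵀ); (vi) w*_k = √(nλ_H/λ_W)·h*_k for every k ∈ [K]. If c > 1, then g attains its global minimum at (W*, H*, b*) = (0, 0, (1/K)·1_K). -/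

import Mathlib

open Matrix Finset

noncomputable section

/-- Squared Frobenius norm of a real matrix. -/
def frobSq {m n : Type*} [Fintype m] [Fintype n] (A : Matrix m n ℝ) : ℝ :=
  ∑ i, ∑ j, (A i j) ^ 2

lemma frobSq_nonneg {m n : Type*} [Fintype m] [Fintype n] (A : Matrix m n ℝ) :
    0 ≤ frobSq A :=
  Finset.sum_nonneg fun _ _ => Finset.sum_nonneg fun _ _ => sq_nonneg _

namespace NCaux

/-- centered identity entries -/
def P (K : ℕ) (k k' : Fin K) : ℝ := (if k' = k then 1 else 0) - 1/(K:ℝ)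

lemma P_symm (K : ℕ) (k k' : Fin K) : P K k k' = P K k' k := by
  simp [P, eq_comm]

lemma sum_P (K : ℕ) (hK : (K:ℝ) ≠ 0) (k : Fin K) : ∑ k', P K k k' = 0 := by
  simp [P, Finset.sum_sub_distrib, Finset.sum_ite_eq', Finset.card_univ]
  field_simp
  norm_num

lemma sum_P_sq_row (K : ℕ) (hK : (K:ℝ) ≠ 0) (k : Fin K) :
    ∑ k', (P K k k')^2 = 1 - 1/(K:ℝ) := by
  have : ∀ k' : Fin K, (P K k k')^2
      = (if k' = k then (1:ℝ) else 0) * (1 - 2/(K:ℝ)) + 1/(K:ℝ)^2 := by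
    intro k'
    by_cases h : k' = k <;> simp [P, h] <;> ring
  rw [Finset.sum_congr rfl fun k' _ => this k']
  rw [Finset.sum_add_distrib, ← Finset.sum_mul, Finset.sum_ite_eq', Finset.sum_const,
    Finset.card_univ, Fintype.card_fin]
  simp only [Finset.mem_univ, if_pos, nsmul_eq_mul]
  field_simp <;> ring

lemma sum_P_sq (K : ℕ) (hK : (K:ℝ) ≠ 0) : ∑ k, ∑ k', (P K k k')^2 = (K:ℝ) - 1 := by
  rw [Finset.sum_congr rfl fun k _ => sum_P_sq_row K hK k, Finset.sum_const,
    Finset.card_univ, Fintype.card_fin, nsmul_eq_mul]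
  field_simp

lemma sum_ite_P (K : ℕ) (k : Fin K) :
    ∑ k', (if k' = k then (1:ℝ) else 0) * P K k k' = 1 - 1/(K:ℝ) := by
  have : ∀ k' : Fin K, (if k' = k then (1:ℝ) else 0) * P K k k'
      = (if k' = k then (1 - 1/(K:ℝ)) else 0) := by
    intro k'; by_cases h : k' = k <;> simp [P, h]
  rw [Finset.sum_congr rfl fun k' _ => this k', Finset.sum_ite_eq']
  simp

lemma P_mul (K : ℕ) (hK : (K:ℝ) ≠ 0) (k k'' : Fin K) :
    ∑ k', P K k k' * P K k' k'' = P K k k'' := by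
  have : ∀ k' : Fin K, P K k k' * P K k' k''
      = (if k' = k then (1:ℝ) else 0) * (if k'' = k' then (1:ℝ) else 0)
        - (if k' = k then (1:ℝ) else 0) * (1/(K:ℝ))
        - (if k'' = k' then (1:ℝ) else 0) * (1/(K:ℝ)) + 1/(K:ℝ)^2 := by
    intro k'; simp only [P]; ring
  rw [Finset.sum_congr rfl fun k' _ => this k']
  rw [Finset.sum_add_distrib, Finset.sum_sub_distrib, Finset.sum_sub_distrib]
  have h1 : ∑ k' : Fin K, (if k' = k then (1:ℝ) else 0) * (if k'' = k' then (1:ℝ) else 0)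
      = if k'' = k then (1:ℝ) else 0 := by
    have : ∀ k' : Fin K, (if k' = k then (1:ℝ) else 0) * (if k'' = k' then (1:ℝ) else 0)
        = if k' = k then (if k'' = k then (1:ℝ) else 0) else 0 := by
      intro k'; by_cases h : k' = k <;> simp [h]
    rw [Finset.sum_congr rfl fun k' _ => this k', Finset.sum_ite_eq']
    simp
  rw [h1, ← Finset.sum_mul, ← Finset.sum_mul, Finset.sum_ite_eq']
  have h2 : ∑ k' : Fin K, (if k'' = k' then (1:ℝ) else 0) = 1 := by
    rw [Finset.sum_ite_eq]; simp
  rw [h2, Finset.sum_const, Finset.card_univ, Fintype.card_fin, nsmul_eq_mul]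
  simp only [Finset.mem_univ, if_pos, P]
  by_cases h : k'' = k <;> simp [h] <;> field_simp <;> ring

lemma sum_embed (K d : ℕ) (hd : K ≤ d) (F : Fin K → ℝ) :
    ∑ j : Fin d, (if h : (j : ℕ) < K then F ⟨j, h⟩ else 0) = ∑ j : Fin K, F j := by
  rw [Fin.sum_univ_eq_sum_range (fun m => if h : m < K then F ⟨m, h⟩ else 0) d]
  have h2 : ∑ j : Fin K, F j = ∑ m ∈ Finset.range K, (if h : m < K then F ⟨m, h⟩ else 0) := by
    rw [← Fin.sum_univ_eq_sum_range (fun m => if h : m < K then F ⟨m, h⟩ else 0) K]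
    exact Finset.sum_congr rfl fun j _ => by simp [j.isLt]
  rw [h2]
  exact (Finset.sum_subset (Finset.range_subset_range.mpr hd)
    (fun x _ hx => dif_neg (by simpa using hx))).symm

lemma cs_sum2 {ι κ : Type*} [Fintype ι] [Fintype κ] (f g : ι → κ → ℝ) :
    (∑ i, ∑ j, f i j * g i j)^2 ≤ (∑ i, ∑ j, (f i j)^2) * (∑ i, ∑ j, (g i j)^2) := by
  have h1 : ∑ i, ∑ j, f i j * g i j = ∑ p : ι × κ, f p.1 p.2 * g p.1 p.2 := by
    rw [Fintype.sum_prod_type]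
  have h2 : ∑ i, ∑ j, (f i j)^2 = ∑ p : ι × κ, (f p.1 p.2)^2 := by
    rw [Fintype.sum_prod_type]
  have h3 : ∑ i, ∑ j, (g i j)^2 = ∑ p : ι × κ, (g p.1 p.2)^2 := by
    rw [Fintype.sum_prod_type]
  rw [h1, h2, h3]
  exact Finset.sum_mul_sq_le_sq_mul_sq Finset.univ _ _

lemma cs_one {ι : Type*} [Fintype ι] (f : ι → ℝ) :
    (∑ i, f i)^2 ≤ (Fintype.card ι : ℝ) * ∑ i, (f i)^2 := by
  have := Finset.sum_mul_sq_le_sq_mul_sq Finset.univ f (fun _ => (1:ℝ))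
  simp only [mul_one, one_pow, Finset.sum_const, Finset.card_univ, nsmul_eq_mul] at this
  linarith [this]

lemma sum_sq_expand {ι : Type*} [Fintype ι] (f g : ι → ℝ) (a b : ℝ) :
    ∑ i, (a * f i - b * g i)^2
      = a^2 * ∑ i, (f i)^2 - 2*a*b*(∑ i, f i * g i) + b^2 * ∑ i, (g i)^2 := by
  have : ∀ i, (a * f i - b * g i)^2
      = a^2 * (f i)^2 - 2*a*b*(f i * g i) + b^2 * (g i)^2 := fun i => by ring
  rw [Finset.sum_congr rfl fun i _ => this i]
  rw [Finset.sum_add_distrib, Finset.sum_sub_distrib, ← Finset.mul_sum, ← Finset.mul_sum,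
    ← Finset.mul_sum]

lemma sum_sq_zero {ι : Type*} [Fintype ι] {f : ι → ℝ} (h : ∑ i, (f i)^2 = 0) (i : ι) :
    f i = 0 := by
  have := (Finset.sum_eq_zero_iff_of_nonneg (fun i _ => sq_nonneg (f i))).mp h i
    (Finset.mem_univ i)
  exact pow_eq_zero_iff (by norm_num) |>.mp this

lemma sum_sq_zero2 {ι κ : Type*} [Fintype ι] [Fintype κ] {f : ι → κ → ℝ}
    (h : ∑ i, ∑ j, (f i j)^2 = 0) (i : ι) (j : κ) : f i j = 0 := by
  have h2 : ∑ p : ι × κ, (f p.1 p.2)^2 = 0 := by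
    rw [Fintype.sum_prod_type]; exact h
  exact sum_sq_zero h2 (i, j)

lemma amgm_sqrt {x y : ℝ} (hx : 0 ≤ x) (hy : 0 ≤ y) :
    Real.sqrt x * Real.sqrt y ≤ (x + y)/2 := by
  nlinarith [sq_nonneg (Real.sqrt x - Real.sqrt y), Real.sq_sqrt hx, Real.sq_sqrt hy,
    Real.sqrt_nonneg x, Real.sqrt_nonneg y]


lemma sum_prod_eq {K n : ℕ} (f : Fin K × Fin n → ℝ) :
    ∑ p : Fin K × Fin n, f p = ∑ k, ∑ i, f (k, i) := by
  rw [Fintype.sum_prod_type]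

/-- inner product of W*H with the centered label matrix -/
def Th {K d n : ℕ} (W : Matrix (Fin K) (Fin d) ℝ) (H : Matrix (Fin d) (Fin K × Fin n) ℝ) : ℝ :=
  ∑ k, ∑ p : Fin K × Fin n, (∑ j, W k j * H j p) * P K k p.1

def Cm {K d n : ℕ} (H : Matrix (Fin d) (Fin K × Fin n) ℝ) (j : Fin d) (k : Fin K) : ℝ :=
  ∑ p : Fin K × Fin n, H j p * P K k p.1

def sRow {K d n : ℕ} (H : Matrix (Fin d) (Fin K × Fin n) ℝ) (j : Fin d) (k : Fin K) : ℝ :=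
  ∑ i, H j (k, i)

lemma sum_P_prod {K n : ℕ} (hK : (K:ℝ) ≠ 0) (k : Fin K) :
    ∑ p : Fin K × Fin n, P K k p.1 = 0 := by
  rw [sum_prod_eq]
  simp only [Finset.sum_const, Finset.card_univ, Fintype.card_fin, nsmul_eq_mul]
  rw [← Finset.mul_sum, sum_P K hK k, mul_zero]

lemma sum_P_prod_sq {K n : ℕ} (hK : (K:ℝ) ≠ 0) :
    ∑ k, ∑ p : Fin K × Fin n, (P K k p.1)^2 = (n:ℝ)*((K:ℝ)-1) := by
  have h1 : ∀ k : Fin K, ∑ p : Fin K × Fin n, (P K k p.1)^2 = (n:ℝ) * (1 - 1/(K:ℝ)) := by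
    intro k
    rw [sum_prod_eq]
    dsimp only
    simp only [Finset.sum_const, Finset.card_univ, Fintype.card_fin, nsmul_eq_mul]
    rw [← Finset.mul_sum, sum_P_sq_row K hK k]
  rw [Finset.sum_congr rfl fun k _ => h1 k, Finset.sum_const, Finset.card_univ,
    Fintype.card_fin, nsmul_eq_mul]
  field_simp <;> ring

lemma sum_Y_P {K n : ℕ} (hK : (K:ℝ) ≠ 0) :
    ∑ k, ∑ p : Fin K × Fin n, (if p.1 = k then (1:ℝ) else 0) * P K k p.1
      = (n:ℝ)*((K:ℝ)-1) := by
  have h1 : ∀ k : Fin K, ∑ p : Fin K × Fin n, (if p.1 = k then (1:ℝ) else 0) * P K k p.1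
      = (n:ℝ) * (1 - 1/(K:ℝ)) := by
    intro k
    rw [sum_prod_eq]
    dsimp only
    show ∑ k', ∑ _i : Fin n, (if k' = k then (1:ℝ) else 0) * P K k k' = _
    simp only [Finset.sum_const, Finset.card_univ, Fintype.card_fin, nsmul_eq_mul]
    rw [← Finset.mul_sum, sum_ite_P K k]
  rw [Finset.sum_congr rfl fun k _ => h1 k, Finset.sum_const, Finset.card_univ,
    Fintype.card_fin, nsmul_eq_mul]
  field_simp <;> ring

lemma Th_eq {K d n : ℕ} (W : Matrix (Fin K) (Fin d) ℝ) (H : Matrix (Fin d) (Fin K × Fin n) ℝ) :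
    Th W H = ∑ j, ∑ k, W k j * Cm H j k := by
  unfold Th Cm
  calc ∑ k, ∑ p : Fin K × Fin n, (∑ j, W k j * H j p) * P K k p.1
      = ∑ k, ∑ j, ∑ p : Fin K × Fin n, W k j * (H j p * P K k p.1) := by
        refine Finset.sum_congr rfl fun k _ => ?_
        rw [Finset.sum_comm]
        refine Finset.sum_congr rfl fun p _ => ?_
        rw [Finset.sum_mul]
        exact Finset.sum_congr rfl fun j _ => by ring
    _ = ∑ j, ∑ k, W k j * ∑ p : Fin K × Fin n, H j p * P K k p.1 := by
        rw [Finset.sum_comm]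
        exact Finset.sum_congr rfl fun j _ => Finset.sum_congr rfl fun k _ =>
          (Finset.mul_sum _ _ _).symm

lemma Cm_eq {K d n : ℕ} (H : Matrix (Fin d) (Fin K × Fin n) ℝ) (j : Fin d) (k : Fin K) :
    Cm H j k = sRow H j k - (∑ k', sRow H j k')/(K:ℝ) := by
  unfold Cm sRow
  rw [sum_prod_eq]
  have h1 : ∀ k' : Fin K, ∑ i : Fin n, H j (k', i) * P K k k'
      = (if k' = k then (∑ i, H j (k', i)) else 0) - (∑ i, H j (k', i)) * (1/(K:ℝ)) := by
    intro k'
    rw [← Finset.sum_mul]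
    by_cases h : k' = k <;> simp [P, h] <;> ring
  rw [Finset.sum_congr rfl fun k' _ => h1 k', Finset.sum_sub_distrib, Finset.sum_ite_eq']
  rw [← Finset.sum_mul]
  simp only [Finset.mem_univ, if_pos]
  ring

lemma Cm_sq_row {K d n : ℕ} (hK : (K:ℝ) ≠ 0) (H : Matrix (Fin d) (Fin K × Fin n) ℝ)
    (j : Fin d) :
    ∑ k, (Cm H j k)^2 = (∑ k, (sRow H j k)^2) - (∑ k, sRow H j k)^2/(K:ℝ) := by
  have h1 : ∀ k : Fin K, Cm H j k
      = 1 * sRow H j k - ((∑ k', sRow H j k')/(K:ℝ)) * 1 := by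
    intro k; rw [Cm_eq]; ring
  simp_rw [fun k => congrArg (·^2) (h1 k)]
  rw [sum_sq_expand (fun k => sRow H j k) (fun _ => (1:ℝ)) 1 ((∑ k', sRow H j k')/(K:ℝ))]
  simp only [one_pow, mul_one, Finset.sum_const, Finset.card_univ, Fintype.card_fin,
    nsmul_eq_mul]
  field_simp <;> ring

lemma sRow_sq_le {K d n : ℕ} (H : Matrix (Fin d) (Fin K × Fin n) ℝ) (j : Fin d) (k : Fin K) :
    (sRow H j k)^2 ≤ (n:ℝ) * ∑ i, (H j (k, i))^2 := by
  have := cs_one (fun i : Fin n => H j (k, i))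
  simpa [sRow] using this

lemma Cm_row_le {K d n : ℕ} (hK : (0:ℝ) < (K:ℝ)) (H : Matrix (Fin d) (Fin K × Fin n) ℝ)
    (j : Fin d) :
    ∑ k, (Cm H j k)^2 ≤ (n:ℝ) * ∑ p : Fin K × Fin n, (H j p)^2 := by
  rw [Cm_sq_row (ne_of_gt hK) H j]
  have h1 : ∑ k, (sRow H j k)^2 ≤ (n:ℝ) * ∑ p : Fin K × Fin n, (H j p)^2 := by
    rw [sum_prod_eq fun p => (H j p)^2, Finset.mul_sum]
    exact Finset.sum_le_sum fun k _ => sRow_sq_le H j k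
  have h2 : 0 ≤ (∑ k, sRow H j k)^2/(K:ℝ) := by positivity
  linarith

lemma sum_sq_expand2 {ι κ : Type*} [Fintype ι] [Fintype κ] (f g : ι → κ → ℝ) (a b : ℝ) :
    ∑ i, ∑ j, (a * f i j - b * g i j)^2
      = a^2 * (∑ i, ∑ j, (f i j)^2) - 2*a*b*(∑ i, ∑ j, f i j * g i j)
        + b^2 * (∑ i, ∑ j, (g i j)^2) := by
  have h0 : ∀ (F : ι → κ → ℝ), ∑ i, ∑ j, F i j = ∑ p : ι × κ, F p.1 p.2 := fun F => by
    rw [Fintype.sum_prod_type]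
  rw [h0 (fun i j => (a * f i j - b * g i j)^2), h0 (fun i j => (f i j)^2),
    h0 (fun i j => f i j * g i j), h0 (fun i j => (g i j)^2)]
  exact sum_sq_expand (fun p : ι × κ => f p.1 p.2) (fun p => g p.1 p.2) a b

end NCaux

open NCaux

set_option maxHeartbeats 800000 in
/-- **Theorem 2** (UFM with regularized MSE loss, unregularized bias).
If `c := K√(nλ_H λ_W) ≤ 1`, any global minimizer `(W*, H*, b*)` of
`g(W,H,b) = (1/(2Kn))‖WH + b1_Nᵀ − Y‖_F² + (λ_W/2)‖W‖_F² + (λ_H/2)‖H‖_F²`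
satisfies: `b* = (1/K)1_K`; within-class collapse; zero global mean; equal norms
`ρ = ((1−c)(K−1)/K)√(λ_W/(nλ_H))`; simplex-ETF Gram matrix; and alignment of weights
with features.  If `c > 1`, `(0,0,(1/K)1_K)` is a global minimizer. -/
theorem ufm_mse_unregBias_simplexETF_collapse
    (K d n : ℕ) (hK : 2 ≤ K) (hd : K ≤ d) (hn : 1 ≤ n)
    (lW lH : ℝ) (hlW : 0 < lW) (hlH : 0 < lH)
    (c : ℝ) (hc : c = (K : ℝ) * Real.sqrt ((n : ℝ) * lH * lW))
    (ρ : ℝ) (hρ : ρ = (1 - c) * ((K : ℝ) - 1) / (K : ℝ) * Real.sqrt (lW / ((n : ℝ) * lH)))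
    (Y : Matrix (Fin K) (Fin K × Fin n) ℝ)
    (hY : ∀ k p, Y k p = if p.1 = k then 1 else 0)
    (g : Matrix (Fin K) (Fin d) ℝ → Matrix (Fin d) (Fin K × Fin n) ℝ → (Fin K → ℝ) → ℝ)
    (hg : ∀ W H b, g W H b =
      1 / (2 * (K : ℝ) * (n : ℝ)) *
          frobSq (W * H + Matrix.of (fun k (_ : Fin K × Fin n) => b k) - Y)
        + lW / 2 * frobSq W + lH / 2 * frobSq H) :
    (c ≤ 1 →
      ∀ (Ws : Matrix (Fin K) (Fin d) ℝ) (Hs : Matrix (Fin d) (Fin K × Fin n) ℝ)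
        (bs : Fin K → ℝ),
        (∀ W H b, g Ws Hs bs ≤ g W H b) →
        -- (i) optimal bias
        (∀ k, bs k = 1 / (K : ℝ)) ∧
        ∃ h : Fin K → Fin d → ℝ,
          -- (ii) within-class collapse
          (∀ (k : Fin K) (i : Fin n) (j : Fin d), Hs j (k, i) = h k j) ∧
          -- (iii) zero global feature mean
          (∀ j : Fin d, (1 / (K : ℝ)) * ∑ k, h k j = 0) ∧
          -- (iv) equal squared norms, all equal ρ
          (∀ k : Fin K, ∑ j, (h k j) ^ 2 = ρ) ∧
          -- (v) simplex-ETF Gram matrix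
          (∀ k k' : Fin K, ∑ j, h k j * h k' j
              = ρ * ((K : ℝ) / ((K : ℝ) - 1)) *
                  ((if k = k' then 1 else 0) - 1 / (K : ℝ))) ∧
          -- (vi) weights aligned with features
          (∀ (k : Fin K) (j : Fin d), Ws k j = Real.sqrt ((n : ℝ) * lH / lW) * h k j)) ∧
    (1 < c → ∀ W H b, g 0 0 (fun _ => 1 / (K : ℝ)) ≤ g W H b) := by
  classical
  have hKR : (2:ℝ) ≤ (K:ℝ) := by exact_mod_cast hK
  have hK0 : (0:ℝ) < (K:ℝ) := by linarith
  have hn0 : (0:ℝ) < (n:ℝ) := by exact_mod_cast Nat.lt_of_lt_of_le Nat.zero_lt_one hn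
  have hK0' : (K:ℝ) ≠ 0 := ne_of_gt hK0
  have hn0' : (n:ℝ) ≠ 0 := ne_of_gt hn0
  have hKm1 : (0:ℝ) < (K:ℝ) - 1 := by linarith
  set N1 : ℝ := (n:ℝ) * ((K:ℝ) - 1) with hN1def
  clear_value N1
  have hN1 : 0 < N1 := by rw [hN1def]; exact mul_pos hn0 hKm1
  have hcpos : 0 < c := by
    rw [hc]
    exact mul_pos hK0 (Real.sqrt_pos.mpr (by positivity))
  have h2KnN1 : (0:ℝ) < 2*(K:ℝ)*(n:ℝ)*N1 :=
    mul_pos (mul_pos (mul_pos two_pos hK0) hn0) hN1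
  -- residual entries
  set RR : Matrix (Fin K) (Fin d) ℝ → Matrix (Fin d) (Fin K × Fin n) ℝ → (Fin K → ℝ) →
      Fin K → Fin K × Fin n → ℝ :=
    fun W H b k p => (∑ j, W k j * H j p) + b k - Y k p with hRRdef
  set SS : Matrix (Fin K) (Fin d) ℝ → Matrix (Fin d) (Fin K × Fin n) ℝ → (Fin K → ℝ) → ℝ :=
    fun W H b => ∑ k, ∑ p : Fin K × Fin n, (RR W H b k p)^2 with hSSdef
  clear_value RR SS
  have hYP : ∀ k (p : Fin K × Fin n), Y k p = P K k p.1 + 1/(K:ℝ) := by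
    intro k p; rw [hY]; simp [NCaux.P]
  have hSSfrob : ∀ W H b,
      frobSq (W * H + Matrix.of (fun k (_ : Fin K × Fin n) => b k) - Y) = SS W H b := by
    intro W H b
    rw [hSSdef]
    unfold frobSq
    refine Finset.sum_congr rfl fun k _ => Finset.sum_congr rfl fun p _ => ?_
    simp only [hRRdef, Matrix.sub_apply, Matrix.add_apply, Matrix.of_apply, Matrix.mul_apply]
  have gform : ∀ W H b, g W H b
      = 1/(2*(K:ℝ)*(n:ℝ)) * SS W H b + lW/2 * frobSq W + lH/2 * frobSq H := by
    intro W H b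
    rw [hg, hSSfrob]
  have hexpand : ∀ W H b, 2*(K:ℝ)*(n:ℝ)*N1 * g W H b
      = N1 * SS W H b + (K:ℝ)*(n:ℝ)*N1*(lW * frobSq W + lH * frobSq H) := by
    intro W H b
    rw [gform]
    field_simp
    ring
  -- inner product of residual with centered labels
  have hRY : ∀ W H b, ∑ k, ∑ p : Fin K × Fin n, RR W H b k p * P K k p.1 = Th W H - N1 := by
    intro W H b
    have expand : ∀ k (p : Fin K × Fin n),
        RR W H b k p * P K k p.1
          = (∑ j, W k j * H j p) * P K k p.1 + b k * P K k p.1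
            - (if p.1 = k then (1:ℝ) else 0) * P K k p.1 := by
      intro k p; simp only [hRRdef]; rw [hY]; ring
    rw [Finset.sum_congr rfl fun k _ => Finset.sum_congr rfl fun p _ => expand k p]
    simp only [Finset.sum_add_distrib, Finset.sum_sub_distrib]
    have hB : ∀ k : Fin K, ∑ p : Fin K × Fin n, b k * P K k p.1 = 0 := by
      intro k; rw [← Finset.mul_sum, sum_P_prod hK0' k, mul_zero]
    rw [Finset.sum_congr rfl fun k _ => hB k, sum_Y_P hK0']
    simp only [Finset.sum_const, Finset.card_univ, Fintype.card_fin, nsmul_eq_mul, mul_zero,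
      add_zero]
    rw [hN1def]
    rfl
  have hcsfit : ∀ W H b, (Th W H - N1)^2 ≤ N1 * SS W H b := by
    intro W H b
    have h := cs_sum2 (fun k p => RR W H b k p) (fun (k : Fin K) (p : Fin K × Fin n) => P K k p.1)
    rw [hRY W H b] at h
    have h2 : ∑ k, ∑ p : Fin K × Fin n, (P K k p.1)^2 = N1 := by
      rw [sum_P_prod_sq hK0', hN1def]
    rw [h2] at h
    rw [hSSdef]
    nlinarith [h]
  -- Cauchy-Schwarz bound for Th
  have hTle : ∀ (W : Matrix (Fin K) (Fin d) ℝ) (H : Matrix (Fin d) (Fin K × Fin n) ℝ),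
      Th W H ≤ Real.sqrt (frobSq W * ((n:ℝ) * frobSq H)) := by
    intro W H
    rcases le_or_gt (Th W H) 0 with h|h
    · exact h.trans (Real.sqrt_nonneg _)
    · have hfw : 0 ≤ frobSq W := frobSq_nonneg W
      have hcs := cs_sum2 (fun (j : Fin d) (k : Fin K) => W k j) (fun j k => Cm H j k)
      rw [← Th_eq W H] at hcs
      have h1 : ∑ j, ∑ k, (W k j)^2 = frobSq W := by
        rw [Finset.sum_comm]; rfl
      have h2 : ∑ j, ∑ k, (Cm H j k)^2 ≤ (n:ℝ) * frobSq H := by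
        unfold frobSq
        rw [Finset.mul_sum]
        exact Finset.sum_le_sum fun j _ => Cm_row_le hK0 H j
      rw [h1] at hcs
      have h3 : (Th W H)^2 ≤ frobSq W * ((n:ℝ) * frobSq H) := by
        calc (Th W H)^2 ≤ frobSq W * (∑ j, ∑ k, (Cm H j k)^2) := hcs
          _ ≤ frobSq W * ((n:ℝ) * frobSq H) := mul_le_mul_of_nonneg_left h2 hfw
      calc Th W H = Real.sqrt ((Th W H)^2) := (Real.sqrt_sq h.le).symm
        _ ≤ _ := Real.sqrt_le_sqrt h3
  -- the sqrt algebra identity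
  have hsqrtkey : ∀ A B : ℝ, 0 ≤ A → 0 ≤ B →
      c * Real.sqrt (A * ((n:ℝ)*B)) = (K:ℝ)*(n:ℝ)*(Real.sqrt (lW*A) * Real.sqrt (lH*B)) := by
    intro A B hA hB
    have e0 : (n:ℝ)*lH*lW * (A*((n:ℝ)*B)) = ((n:ℝ)*(n:ℝ))*((lW*A)*(lH*B)) := by ring
    have e1 : Real.sqrt ((n:ℝ)*lH*lW) * Real.sqrt (A*((n:ℝ)*B))
        = (n:ℝ) * (Real.sqrt (lW*A) * Real.sqrt (lH*B)) := by
      rw [← Real.sqrt_mul (by positivity : (0:ℝ) ≤ (n:ℝ)*lH*lW), e0,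
        Real.sqrt_mul (by positivity : (0:ℝ) ≤ (n:ℝ)*(n:ℝ)),
        Real.sqrt_mul_self hn0.le,
        Real.sqrt_mul (by positivity : (0:ℝ) ≤ lW*A)]
    rw [hc, mul_assoc, e1]
    ring
  -- regularizer lower bound
  have hregT : ∀ (W : Matrix (Fin K) (Fin d) ℝ) (H : Matrix (Fin d) (Fin K × Fin n) ℝ),
      2*c*(Th W H) ≤ (K:ℝ)*(n:ℝ)*(lW * frobSq W + lH * frobSq H) := by
    intro W H
    have hA0 : 0 ≤ frobSq W := frobSq_nonneg W
    have hB0 : 0 ≤ frobSq H := frobSq_nonneg H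
    have h1 := mul_le_mul_of_nonneg_left (hTle W H) (by positivity : (0:ℝ) ≤ 2*c)
    have h2 := hsqrtkey (frobSq W) (frobSq H) hA0 hB0
    have h3 := amgm_sqrt (mul_nonneg hlW.le hA0) (mul_nonneg hlH.le hB0)
    have h4 := mul_le_mul_of_nonneg_left h3
      (by positivity : (0:ℝ) ≤ 2*(K:ℝ)*(n:ℝ))
    nlinarith [h1, h2, h4]
  constructor
  · -- c ≤ 1 branch
    intro hc1 Ws Hs bs hmin
    have h1c : 0 ≤ 1 - c := by linarith only [hc1]
    have hnlH : 0 < (n:ℝ)*lH := by positivity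
    -- ===== ETF construction and its value =====
    set q1 : ℝ := Real.sqrt (lW / ((n:ℝ)*lH)) with hq1
    set q2 : ℝ := Real.sqrt ((n:ℝ)*lH / lW) with hq2
    clear_value q1 q2
    have hq1pos : 0 < q1 := by rw [hq1]; exact Real.sqrt_pos.mpr (by positivity)
    have hq2pos : 0 < q2 := by rw [hq2]; exact Real.sqrt_pos.mpr (by positivity)
    set α : ℝ := Real.sqrt ((1-c) * q1) with hα
    set β : ℝ := Real.sqrt ((1-c) * q2) with hβ
    clear_value α β
    have hα2 : α^2 = (1-c) * q1 := by rw [hα]; exact Real.sq_sqrt (mul_nonneg h1c hq1pos.le)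
    have hβ2 : β^2 = (1-c) * q2 := by rw [hβ]; exact Real.sq_sqrt (mul_nonneg h1c hq2pos.le)
    have hq1q2 : q1 * q2 = 1 := by
      rw [hq1, hq2, ← Real.sqrt_mul (by positivity)]
      rw [show lW / ((n:ℝ)*lH) * ((n:ℝ)*lH / lW) = 1 by field_simp]
      exact Real.sqrt_one
    have hαβ : α * β = 1 - c := by
      rw [hα, hβ, ← Real.sqrt_mul (mul_nonneg h1c hq1pos.le)]
      rw [show (1-c)*q1*((1-c)*q2) = (1-c)^2 * (q1*q2) by ring, hq1q2, mul_one]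
      exact Real.sqrt_sq h1c
    have hcK : Real.sqrt ((n:ℝ)*lH*lW) = c / (K:ℝ) := by
      rw [hc]; field_simp
    have hlWq2 : lW * q2 = c / (K:ℝ) := by
      rw [hq2, ← hcK, ← Real.sqrt_sq hlW.le, ← Real.sqrt_mul (sq_nonneg lW)]
      congr 1
      field_simp
      rw [Real.sq_sqrt (by positivity)]
    have hnlHq1 : (n:ℝ)*lH * q1 = c / (K:ℝ) := by
      rw [hq1, ← hcK, ← Real.sqrt_sq hnlH.le, ← Real.sqrt_mul (sq_nonneg ((n:ℝ)*lH))]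
      congr 1
      field_simp
      rw [Real.sq_sqrt (by positivity)]
    set W0 : Matrix (Fin K) (Fin d) ℝ :=
      fun k j => if hj : (j:ℕ) < K then β * P K k ⟨(j:ℕ), hj⟩ else 0 with hW0
    set H0 : Matrix (Fin d) (Fin K × Fin n) ℝ :=
      fun j p => if hj : (j:ℕ) < K then α * P K ⟨(j:ℕ), hj⟩ p.1 else 0 with hH0
    clear_value W0 H0
    have hW0H0 : ∀ k (p : Fin K × Fin n), ∑ j, W0 k j * H0 j p = (1-c) * P K k p.1 := by
      intro k p
      have h1 : ∀ j : Fin d, W0 k j * H0 j p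
          = (if hj : (j:ℕ) < K then (α*β) * (P K k ⟨(j:ℕ),hj⟩ * P K ⟨(j:ℕ),hj⟩ p.1) else 0) := by
        intro j
        by_cases hj : (j:ℕ) < K
        · simp only [hW0, hH0, dif_pos hj]; ring
        · simp only [hW0, hH0, dif_neg hj, zero_mul]
      rw [Finset.sum_congr rfl fun j _ => h1 j,
        sum_embed K d hd (fun j' => (α*β) * (P K k j' * P K j' p.1)),
        ← Finset.mul_sum, P_mul K hK0' k p.1, hαβ]
    have hfrobW0 : frobSq W0 = β^2 * ((K:ℝ)-1) := by
      unfold frobSq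
      have h1 : ∀ k : Fin K, ∑ j : Fin d, (W0 k j)^2
          = ∑ j' : Fin K, β^2 * (P K k j')^2 := by
        intro k
        rw [← sum_embed K d hd (fun j' => β^2 * (P K k j')^2)]
        refine Finset.sum_congr rfl fun j _ => ?_
        by_cases hj : (j:ℕ) < K
        · simp only [hW0, dif_pos hj]; ring
        · simp only [hW0, dif_neg hj]; ring
      rw [Finset.sum_congr rfl fun k _ => h1 k]
      simp only [← Finset.mul_sum]
      rw [sum_P_sq K hK0']
    have hfrobH0 : frobSq H0 = α^2 * ((n:ℝ)*((K:ℝ)-1)) := by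
      unfold frobSq
      have h1 : ∀ j : Fin d, ∑ p : Fin K × Fin n, (H0 j p)^2
          = (if hj : (j:ℕ) < K then ((n:ℝ)*α^2) * (∑ k', (P K ⟨(j:ℕ),hj⟩ k')^2) else 0) := by
        intro j
        by_cases hj : (j:ℕ) < K
        · rw [dif_pos hj, sum_prod_eq fun p => (H0 j p)^2]
          simp only [hH0, dif_pos hj]
          simp only [Finset.sum_const, Finset.card_univ, Fintype.card_fin, nsmul_eq_mul]
          rw [Finset.mul_sum]
          exact Finset.sum_congr rfl fun k' _ => by ring
        · rw [dif_neg hj]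
          refine Finset.sum_eq_zero fun p _ => ?_
          simp only [hH0, dif_neg hj]
          ring
      rw [Finset.sum_congr rfl fun j _ => h1 j,
        sum_embed K d hd (fun j' => ((n:ℝ)*α^2) * (∑ k', (P K j' k')^2))]
      simp only [← Finset.mul_sum]
      rw [sum_P_sq K hK0']
      ring
    have hRR0 : ∀ k (p : Fin K × Fin n),
        RR W0 H0 (fun _ => 1/(K:ℝ)) k p = -c * P K k p.1 := by
      intro k p
      simp only [hRRdef]
      rw [hW0H0 k p, hYP]
      ring
    have hS0 : SS W0 H0 (fun _ => 1/(K:ℝ)) = c^2 * N1 := by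
      simp only [hSSdef]
      rw [Finset.sum_congr rfl fun k _ => Finset.sum_congr rfl fun p _ =>
        (by rw [hRR0 k p] : RR W0 H0 (fun _ => 1/(K:ℝ)) k p ^2 = (-c * P K k p.1)^2)]
      rw [Finset.sum_congr rfl fun k _ => Finset.sum_congr rfl fun p (_ : p ∈ Finset.univ) =>
        (by ring : (-c * P K k p.1)^2 = c^2 * (P K k p.1)^2)]
      simp only [← Finset.mul_sum]
      rw [sum_P_prod_sq hK0', hN1def]
    have hgW0 : 2*(K:ℝ)*(n:ℝ)*N1 * g W0 H0 (fun _ => 1/(K:ℝ)) = N1^2 * (c*(2-c)) := by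
      rw [hexpand, hS0, hfrobW0, hfrobH0]
      have e1 : lW * (β^2*((K:ℝ)-1)) = ((K:ℝ)-1) * ((1-c)*(c/(K:ℝ))) := by
        rw [hβ2, show lW * ((1-c)*q2*((K:ℝ)-1)) = ((K:ℝ)-1)*((1-c)*(lW*q2)) by ring, hlWq2]
      have e2 : lH * (α^2*((n:ℝ)*((K:ℝ)-1))) = ((K:ℝ)-1) * ((1-c)*(c/(K:ℝ))) := by
        rw [hα2, show lH * ((1-c)*q1*((n:ℝ)*((K:ℝ)-1))) = ((K:ℝ)-1)*((1-c)*((n:ℝ)*lH*q1)) by ring,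
          hnlHq1]
      rw [e1, e2, hN1def]
      field_simp
      ring
    have hUB : 2*(K:ℝ)*(n:ℝ)*N1 * g Ws Hs bs ≤ N1^2 * (c*(2-c)) := by
      rw [← hgW0]
      exact mul_le_mul_of_nonneg_left (hmin W0 H0 _) h2KnN1.le
    -- ===== squeeze: all inequalities are tight =====
    have hA0 : 0 ≤ frobSq Ws := frobSq_nonneg Ws
    have hB0 : 0 ≤ frobSq Hs := frobSq_nonneg Hs
    have hcs := hcsfit Ws Hs bs
    have hmain := hexpand Ws Hs bs
    have hreg := hregT Ws Hs
    have hteq : Th Ws Hs = N1*(1-c) := by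
      have hregN1 := mul_le_mul_of_nonneg_left hreg hN1.le
      have hsq0 : (Th Ws Hs - N1*(1-c))^2 ≤ 0 := by linarith only [hcs, hmain, hUB, hregN1]
      have h0 : (Th Ws Hs - N1*(1-c))^2 = 0 := le_antisymm hsq0 (sq_nonneg _)
      have h1 : Th Ws Hs - N1*(1-c) = 0 := by
        exact pow_eq_zero_iff two_ne_zero |>.mp h0
      linarith only [h1]
    rw [hteq] at hcs hreg
    have hbal : (K:ℝ)*(n:ℝ)*(lW*frobSq Ws + lH*frobSq Hs) = 2*c*(N1*(1-c)) := by
      have hble : N1 * ((K:ℝ)*(n:ℝ)*(lW*frobSq Ws + lH*frobSq Hs)) ≤ N1 * (2*c*(N1*(1-c))) := by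
        linarith only [hcs, hmain, hUB]
      exact le_antisymm (le_of_mul_le_mul_left hble hN1) hreg
    have hSSeq : N1 * SS Ws Hs bs = (N1*(1-c) - N1)^2 := by
      have hbalN1 : N1 * ((K:ℝ)*(n:ℝ)*(lW*frobSq Ws + lH*frobSq Hs)) = N1 * (2*c*(N1*(1-c))) := by
        rw [hbal]
      refine le_antisymm ?_ hcs
      linarith only [hmain, hUB, hbalN1]
    -- pointwise residual
    have hSS' : N1 * (∑ k, ∑ p : Fin K × Fin n, (RR Ws Hs bs k p)^2) = (N1*(1-c) - N1)^2 := by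
      have := hSSeq
      simp only [hSSdef] at this
      exact this
    have hptw : ∀ k (p : Fin K × Fin n), RR Ws Hs bs k p = -c * P K k p.1 := by
      have hz : ∑ k, ∑ p : Fin K × Fin n,
          (N1 * RR Ws Hs bs k p - (N1*(1-c) - N1) * P K k p.1)^2 = 0 := by
        rw [sum_sq_expand2 (fun k p => RR Ws Hs bs k p)
          (fun (k : Fin K) (p : Fin K × Fin n) => P K k p.1) N1 (N1*(1-c) - N1)]
        rw [hRY Ws Hs bs, sum_P_prod_sq hK0', ← hN1def, hteq]
        linear_combination N1 * hSS'
      intro k p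
      have h0 := sum_sq_zero2 hz k p
      have h1 : N1 * RR Ws Hs bs k p = N1 * (-c * P K k p.1) := by linarith only [h0]
      exact mul_left_cancel₀ hN1.ne' h1
    -- row-sum form of the residual (for the bias)
    have hbias0 : ∀ k, ∑ p : Fin K × Fin n, RR Ws Hs bs k p = 0 := by
      intro k
      rw [Finset.sum_congr rfl fun p _ => hptw k p, ← Finset.mul_sum, sum_P_prod hK0' k,
        mul_zero]
    have hYrow : ∀ k : Fin K, ∑ p : Fin K × Fin n, Y k p = (n:ℝ) := by
      intro k
      rw [Finset.sum_congr rfl fun p _ => hY k p,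
        sum_prod_eq fun p => if p.1 = k then (1:ℝ) else 0]
      dsimp only
      show ∑ k', ∑ _i : Fin n, (if k' = k then (1:ℝ) else 0) = _
      simp only [Finset.sum_const, Finset.card_univ, Fintype.card_fin, nsmul_eq_mul]
      rw [← Finset.mul_sum, Finset.sum_ite_eq']
      simp
    have hsplit : ∀ k, ∑ p : Fin K × Fin n, RR Ws Hs bs k p
        = (∑ j, Ws k j * (∑ p : Fin K × Fin n, Hs j p)) + (K:ℝ)*(n:ℝ)*bs k - (n:ℝ) := by
      intro k
      simp only [hRRdef]
      simp only [Finset.sum_sub_distrib, Finset.sum_add_distrib]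
      rw [hYrow k]
      congr 1
      congr 1
      · rw [Finset.sum_comm]
        exact Finset.sum_congr rfl fun j _ => (Finset.mul_sum _ _ _).symm
      · rw [Finset.sum_const, Finset.card_univ]
        simp only [Fintype.card_prod, Fintype.card_fin, nsmul_eq_mul]
        push_cast
        ring
    -- ===== case split on c = 1 vs c < 1 =====
    rcases eq_or_lt_of_le hc1 with hc1e | hc1lt
    · -- c = 1 : W = 0, H = 0
      have hABz : lW*frobSq Ws + lH*frobSq Hs = 0 := by
        have h1 : (K:ℝ)*(n:ℝ)*(lW*frobSq Ws + lH*frobSq Hs) = 0 := by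
          rw [hbal, hc1e]; ring
        have h2 : (K:ℝ)*(n:ℝ) ≠ 0 := by positivity
        rcases mul_eq_zero.mp h1 with h|h
        · exact absurd h h2
        · exact h
      have hAz : frobSq Ws = 0 := by
        have h2 : lW*frobSq Ws = 0 := le_antisymm
          (by linarith only [hABz, mul_nonneg hlH.le hB0]) (mul_nonneg hlW.le hA0)
        rcases mul_eq_zero.mp h2 with h|h
        · exact absurd h hlW.ne'
        · exact h
      have hBz : frobSq Hs = 0 := by
        have h2 : lH*frobSq Hs = 0 := le_antisymm
          (by linarith only [hABz, mul_nonneg hlW.le hA0]) (mul_nonneg hlH.le hB0)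
        rcases mul_eq_zero.mp h2 with h|h
        · exact absurd h hlH.ne'
        · exact h
      have hWs0 : ∀ k j, Ws k j = 0 := by
        have h0 : ∑ k, ∑ j, (Ws k j)^2 = 0 := hAz
        exact fun k j => sum_sq_zero2 h0 k j
      have hHs0 : ∀ j (p : Fin K × Fin n), Hs j p = 0 := by
        have h0 : ∑ j, ∑ p : Fin K × Fin n, (Hs j p)^2 = 0 := hBz
        exact fun j p => sum_sq_zero2 h0 j p
      have hbs : ∀ k, bs k = 1/(K:ℝ) := by
        intro k
        have h1 := hbias0 k
        rw [hsplit k] at h1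
        have h2 : ∑ j, Ws k j * (∑ p : Fin K × Fin n, Hs j p) = 0 :=
          Finset.sum_eq_zero fun j _ => by rw [hWs0 k j, zero_mul]
        rw [h2, zero_add] at h1
        have h3 : (K:ℝ)*(n:ℝ)*bs k = (n:ℝ) := by linarith only [h1]
        have h4 : (n:ℝ) * ((K:ℝ) * bs k) = (n:ℝ) * 1 := by linear_combination h3
        have h5 := mul_left_cancel₀ hn0' h4
        rw [eq_div_iff hK0']
        linarith only [h5]
      have hρ0 : ρ = 0 := by rw [hρ, ← hc1e]; ring
      refine ⟨hbs, fun _ _ => 0, ?_, ?_, ?_, ?_, ?_⟩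
      · intro k i j; exact hHs0 j (k, i)
      · intro j; simp
      · intro k; rw [hρ0]; simp
      · intro k k'; rw [hρ0]; simp
      · intro k j; rw [hWs0 k j]; simp
    · -- c < 1 : full neural collapse structure
      have htpos : 0 < N1*(1-c) := mul_pos hN1 (by linarith only [hc1lt])
      have hkey := hsqrtkey (frobSq Ws) (frobSq Hs) hA0 hB0
      have hamgm := amgm_sqrt (mul_nonneg hlW.le hA0) (mul_nonneg hlH.le hB0)
      have hTle' := hTle Ws Hs
      rw [hteq] at hTle'
      -- Th = sqrt(A * (n*B))
      have hts : N1*(1-c) = Real.sqrt (frobSq Ws * ((n:ℝ)*frobSq Hs)) := by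
        have h1 : 2*c*(N1*(1-c)) ≤ 2*c*Real.sqrt (frobSq Ws * ((n:ℝ)*frobSq Hs)) :=
          mul_le_mul_of_nonneg_left hTle' (by positivity)
        have h3a := mul_le_mul_of_nonneg_left hamgm
          (by positivity : (0:ℝ) ≤ 2*((K:ℝ)*(n:ℝ)))
        have h3 : 2*c*Real.sqrt (frobSq Ws * ((n:ℝ)*frobSq Hs))
            ≤ (K:ℝ)*(n:ℝ)*(lW*frobSq Ws + lH*frobSq Hs) := by
          linarith only [hkey, h3a, hbal]
        have h4 : 2*c*Real.sqrt (frobSq Ws * ((n:ℝ)*frobSq Hs)) = 2*c*(N1*(1-c)) := by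
          rw [← hbal] at h1 ⊢
          exact le_antisymm h3 h1
        have h5 := h4.symm
        exact mul_left_cancel₀ (by positivity : (2*c) ≠ 0) (le_antisymm h1 (le_of_eq h4))
      have hts2 : (N1*(1-c))^2 = frobSq Ws * ((n:ℝ)*frobSq Hs) := by
        rw [hts]
        exact Real.sq_sqrt (mul_nonneg hA0 (mul_nonneg hn0.le hB0))
      have hWbal : lW * frobSq Ws = lH * frobSq Hs := by
        have h5 : (K:ℝ)*(n:ℝ)*(lW*frobSq Ws + lH*frobSq Hs)
            = (K:ℝ)*(n:ℝ)*(2*(Real.sqrt (lW*frobSq Ws) * Real.sqrt (lH*frobSq Hs))) := by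
          rw [hbal]
          rw [show 2*c*(N1*(1-c)) = 2*(c*(N1*(1-c))) by ring]
          rw [show N1*(1-c) = Real.sqrt (frobSq Ws * ((n:ℝ)*frobSq Hs)) from hts]
          rw [hkey]
          ring
        have h6 : lW*frobSq Ws + lH*frobSq Hs
            = 2*(Real.sqrt (lW*frobSq Ws) * Real.sqrt (lH*frobSq Hs)) :=
          mul_left_cancel₀ (by positivity : ((K:ℝ)*(n:ℝ)) ≠ 0) h5
        have h7 : (Real.sqrt (lW*frobSq Ws) - Real.sqrt (lH*frobSq Hs))^2 = 0 := by
          have e1 := Real.sq_sqrt (mul_nonneg hlW.le hA0)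
          have e2 := Real.sq_sqrt (mul_nonneg hlH.le hB0)
          linear_combination e1 + e2 + h6
        have h8 : Real.sqrt (lW*frobSq Ws) = Real.sqrt (lH*frobSq Hs) := by
          have := pow_eq_zero_iff two_ne_zero |>.mp h7
          linarith only [this]
        have h9 := congrArg (fun x => x^2) h8
        rw [Real.sq_sqrt (mul_nonneg hlW.le hA0), Real.sq_sqrt (mul_nonneg hlH.le hB0)] at h9
        exact h9
      have hApos : 0 < frobSq Ws := by
        rcases hA0.lt_or_eq with h|h
        · exact h
        · exfalso
          rw [← h] at hts2
          have h1 : (N1*(1-c))*(N1*(1-c)) = 0 := by rw [← pow_two, hts2]; ring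
          have h2 := mul_pos htpos htpos
          linarith only [h1, h2]
      have hBpos : 0 < frobSq Hs := by
        rcases hB0.lt_or_eq with h|h
        · exact h
        · exfalso
          rw [← h] at hts2
          have h1 : (N1*(1-c))*(N1*(1-c)) = 0 := by rw [← pow_two, hts2]; ring
          have h2 := mul_pos htpos htpos
          linarith only [h1, h2]
      -- Cauchy-Schwarz equality analysis on Th
      have hcs2 := cs_sum2 (fun (j : Fin d) (k : Fin K) => Ws k j) (fun j k => Cm Hs j k)
      rw [← Th_eq Ws Hs, hteq] at hcs2
      have hsumW : ∑ j, ∑ k, (Ws k j)^2 = frobSq Ws := by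
        rw [Finset.sum_comm]; rfl
      rw [hsumW] at hcs2
      have hCle2 : ∑ j, ∑ k, (Cm Hs j k)^2 ≤ (n:ℝ) * frobSq Hs := by
        unfold frobSq
        rw [Finset.mul_sum]
        exact Finset.sum_le_sum fun j _ => Cm_row_le hK0 Hs j
      have hCeq : ∑ j, ∑ k, (Cm Hs j k)^2 = (n:ℝ) * frobSq Hs := by
        refine le_antisymm hCle2 ?_
        have h7 : frobSq Ws * ((n:ℝ)*frobSq Hs) ≤ frobSq Ws * (∑ j, ∑ k, (Cm Hs j k)^2) := by
          rw [← hts2]; exact hcs2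
        exact le_of_mul_le_mul_left h7 hApos
      -- per-row slack is zero
      have hslack : ∀ j : Fin d, ∑ k, (Cm Hs j k)^2 = (n:ℝ) * ∑ p : Fin K × Fin n, (Hs j p)^2 := by
        intro j
        have h8 : ∑ j' : Fin d,
            ((n:ℝ) * ∑ p : Fin K × Fin n, (Hs j' p)^2 - ∑ k, (Cm Hs j' k)^2) = 0 := by
          rw [Finset.sum_sub_distrib, ← Finset.mul_sum]
          have h9 : ∑ j' : Fin d, ∑ p : Fin K × Fin n, (Hs j' p)^2 = frobSq Hs := rfl
          rw [h9, hCeq]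
          ring
        have h10 := (Finset.sum_eq_zero_iff_of_nonneg
          (fun j' _ => sub_nonneg.mpr (Cm_row_le hK0 Hs j'))).mp h8 j (Finset.mem_univ j)
        linarith only [h10]
      -- row sums are zero, per-class CS is tight
      have hSrow : ∀ j, ∑ k, sRow Hs j k = 0 := by
        intro j
        have h10 := Cm_sq_row hK0' Hs j
        have h11 : ∑ k, (sRow Hs j k)^2 ≤ (n:ℝ) * ∑ p : Fin K × Fin n, (Hs j p)^2 := by
          rw [sum_prod_eq fun p => (Hs j p)^2, Finset.mul_sum]
          exact Finset.sum_le_sum fun k _ => sRow_sq_le Hs j k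
        have h12 : (∑ k, sRow Hs j k)^2/(K:ℝ) ≤ 0 := by
          rw [hslack j] at h10
          linarith only [h10, h11]
        have h13 : (∑ k, sRow Hs j k)^2 ≤ 0 := by
          by_contra h
          push_neg at h
          have := div_pos h hK0
          linarith only [this, h12]
        have h14 : (∑ k, sRow Hs j k)^2 = 0 := le_antisymm h13 (sq_nonneg _)
        have := pow_eq_zero_iff two_ne_zero |>.mp h14
        exact this
      have hclass : ∀ j k, (sRow Hs j k)^2 = (n:ℝ) * ∑ i, (Hs j (k,i))^2 := by
        intro j k
        have h14 := Cm_sq_row hK0' Hs j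
        rw [hSrow j] at h14
        have h15 : ∑ k', ((n:ℝ) * ∑ i, (Hs j (k',i))^2 - (sRow Hs j k')^2) = 0 := by
          rw [Finset.sum_sub_distrib, ← Finset.mul_sum]
          rw [← sum_prod_eq fun p => (Hs j p)^2]
          have h16 := hslack j
          rw [h14] at h16
          simp only [ne_eq, OfNat.ofNat_ne_zero, not_false_eq_true, zero_pow, zero_div,
            sub_zero] at h16
          linarith only [h16]
        have h17 := (Finset.sum_eq_zero_iff_of_nonneg
          (fun k' _ => sub_nonneg.mpr (sRow_sq_le Hs j k'))).mp h15 k (Finset.mem_univ k)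
        linarith only [h17]
      have hconst : ∀ j k (i : Fin n), (n:ℝ) * Hs j (k,i) = sRow Hs j k := by
        intro j k i
        have h16 : ∑ i' : Fin n, ((n:ℝ) * Hs j (k,i') - sRow Hs j k * 1)^2 = 0 := by
          rw [sum_sq_expand (fun i' => Hs j (k,i')) (fun _ => (1:ℝ)) (n:ℝ) (sRow Hs j k)]
          simp only [one_pow, mul_one, Finset.sum_const, Finset.card_univ, Fintype.card_fin,
            nsmul_eq_mul]
          have h17 : ∑ i' : Fin n, Hs j (k, i') = sRow Hs j k := rfl
          rw [h17]
          linear_combination (-(n:ℝ)) * hclass j k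
        have h18 := sum_sq_zero h16 i
        have : (n:ℝ) * Hs j (k,i) - sRow Hs j k * 1 = 0 := h18
        linarith only [this]
      have hi0 : (0:ℕ) < n := hn
      set i0 : Fin n := ⟨0, hi0⟩ with hi0def
      clear_value i0
      have hcollapse : ∀ k (i : Fin n) j, Hs j (k,i) = Hs j (k,i0) := by
        intro k i j
        have h1 := hconst j k i
        have h2 := hconst j k i0
        have h3 : (n:ℝ) * Hs j (k,i) = (n:ℝ) * Hs j (k,i0) := by linarith only [h1, h2]
        exact mul_left_cancel₀ hn0' h3
      have hmean : ∀ j, ∑ k, Hs j (k,i0) = 0 := by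
        intro j
        have h18 := hSrow j
        have h19 : ∑ k, sRow Hs j k = (n:ℝ) * ∑ k, Hs j (k,i0) := by
          rw [Finset.mul_sum]
          exact Finset.sum_congr rfl fun k _ => (hconst j k i0).symm
        rw [h19] at h18
        rcases mul_eq_zero.mp h18 with h|h
        · exact absurd h hn0'
        · exact h
      have hCs : ∀ j k, Cm Hs j k = (n:ℝ) * Hs j (k,i0) := by
        intro j k
        rw [Cm_eq, hSrow j]
        simp only [zero_div, sub_zero]
        exact (hconst j k i0).symm
      -- W proportional to the class means
      have hWC : ∀ k j, ((n:ℝ) * frobSq Hs) * Ws k j = (N1*(1-c)) * Cm Hs j k := by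
        have h19 : ∑ j, ∑ k,
            (((n:ℝ)*frobSq Hs) * Ws k j - (N1*(1-c)) * Cm Hs j k)^2 = 0 := by
          rw [sum_sq_expand2 (fun (j : Fin d) (k : Fin K) => Ws k j)
            (fun j k => Cm Hs j k) ((n:ℝ)*frobSq Hs) (N1*(1-c))]
          rw [hsumW, hCeq, ← Th_eq Ws Hs, hteq]
          linear_combination (-((n:ℝ)*frobSq Hs)) * hts2
        intro k j
        have h20 := sum_sq_zero2 h19 j k
        linarith only [h20]
      -- the alignment coefficient
      have hsq6 : Real.sqrt ((n:ℝ)*lH/lW) = (N1*(1-c)) / frobSq Hs := by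
        have h21 : (n:ℝ)*lH/lW = ((N1*(1-c)) / frobSq Hs)^2 := by
          rw [div_pow, eq_div_iff (by positivity : (frobSq Hs)^2 ≠ 0), hts2,
            div_mul_eq_mul_div, div_eq_iff hlW.ne']
          linear_combination (-((n:ℝ)*frobSq Hs)) * hWbal
        rw [h21, Real.sqrt_sq (by positivity)]
      have hvi : ∀ k j, Ws k j = Real.sqrt ((n:ℝ)*lH/lW) * Hs j (k,i0) := by
        intro k j
        have h20 := hWC k j
        rw [hCs j k] at h20
        have h20' : (n:ℝ) * (frobSq Hs * Ws k j) = (n:ℝ) * ((N1*(1-c)) * Hs j (k,i0)) := by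
          linear_combination h20
        have h20'' := mul_left_cancel₀ hn0' h20'
        rw [hsq6, div_mul_eq_mul_div, eq_div_iff hBpos.ne']
        linarith only [h20'']
      -- the bias
      have hbs : ∀ k, bs k = 1/(K:ℝ) := by
        intro k
        have h1 := hbias0 k
        rw [hsplit k] at h1
        have h2 : ∀ j, (∑ p : Fin K × Fin n, Hs j p) = 0 := by
          intro j
          rw [sum_prod_eq fun p => Hs j p]
          exact hSrow j
        rw [Finset.sum_congr rfl fun j (_ : j ∈ Finset.univ) => by rw [h2 j, mul_zero]] at h1
        simp only [Finset.sum_const_zero, zero_add] at h1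
        have h3 : (K:ℝ)*(n:ℝ)*bs k = (n:ℝ) := by linarith only [h1]
        have h4 : (n:ℝ) * ((K:ℝ) * bs k) = (n:ℝ) * 1 := by linear_combination h3
        have h5 := mul_left_cancel₀ hn0' h4
        rw [eq_div_iff hK0']
        linarith only [h5]
      -- the Gram matrix
      have hGram : ∀ k k', Real.sqrt ((n:ℝ)*lH/lW) * (∑ j, Hs j (k,i0) * Hs j (k',i0))
          = (1-c) * P K k k' := by
        intro k k'
        have h1 := hptw k (k', i0)
        simp only [hRRdef] at h1
        rw [hYP k (k',i0), hbs k] at h1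
        have h2 : ∑ j, Ws k j * Hs j (k',i0)
            = Real.sqrt ((n:ℝ)*lH/lW) * ∑ j, Hs j (k,i0) * Hs j (k',i0) := by
          rw [Finset.mul_sum]
          exact Finset.sum_congr rfl fun j _ => by rw [hvi k j]; ring
        rw [h2] at h1
        have h3 : P K k (k', i0).1 = P K k k' := rfl
        rw [h3] at h1
        linarith only [h1]
      have hs1pos : 0 < Real.sqrt ((n:ℝ)*lH/lW) := Real.sqrt_pos.mpr (by positivity)
      have hs12 : Real.sqrt ((n:ℝ)*lH/lW) * Real.sqrt (lW/((n:ℝ)*lH)) = 1 := by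
        rw [← Real.sqrt_mul (by positivity)]
        rw [show (n:ℝ)*lH/lW * (lW/((n:ℝ)*lH)) = 1 by field_simp]
        exact Real.sqrt_one
      have hvρ : ∀ k k', ∑ j, Hs j (k,i0) * Hs j (k',i0)
          = ρ * ((K:ℝ)/((K:ℝ)-1)) * ((if k = k' then (1:ℝ) else 0) - 1/(K:ℝ)) := by
        intro k k'
        have h3 := hGram k k'
        have h4 : ρ * ((K:ℝ)/((K:ℝ)-1)) = (1-c) * Real.sqrt (lW/((n:ℝ)*lH)) := by
          rw [hρ, hq1]
          field_simp
        have h5 : ((if k = k' then (1:ℝ) else 0) - 1/(K:ℝ)) = P K k k' := by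
          simp [NCaux.P, eq_comm]
        rw [h4, h5]
        calc ∑ j, Hs j (k,i0) * Hs j (k',i0)
            = Real.sqrt (lW/((n:ℝ)*lH)) *
              (Real.sqrt ((n:ℝ)*lH/lW) * ∑ j, Hs j (k,i0) * Hs j (k',i0)) := by
              rw [← mul_assoc, mul_comm (Real.sqrt (lW/((n:ℝ)*lH))) (Real.sqrt ((n:ℝ)*lH/lW)),
                hs12, one_mul]
          _ = Real.sqrt (lW/((n:ℝ)*lH)) * ((1-c) * P K k k') := by rw [h3]
          _ = (1-c) * Real.sqrt (lW/((n:ℝ)*lH)) * P K k k' := by ring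
      have hiv : ∀ k, ∑ j, (Hs j (k,i0))^2 = ρ := by
        intro k
        have h6 := hvρ k k
        simp only [if_pos rfl] at h6
        rw [show (∑ j, (Hs j (k,i0))^2) = ∑ j, Hs j (k,i0) * Hs j (k,i0) from
          Finset.sum_congr rfl fun j _ => sq (Hs j (k,i0))]
        rw [h6]
        field_simp
        simp
      exact ⟨hbs, fun k j => Hs j (k,i0), fun k i j => hcollapse k i j,
        fun j => by rw [hmean j, mul_zero], hiv, hvρ, fun k j => by rw [hq2]; exact hvi k j⟩
  · -- c > 1 branch
    intro hc1 W H b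
    have hA0 : 0 ≤ frobSq W := frobSq_nonneg W
    have hB0 : 0 ≤ frobSq H := frobSq_nonneg H
    have hval : 2*(K:ℝ)*(n:ℝ)*N1 * g 0 0 (fun _ => 1/(K:ℝ)) = N1 * N1 := by
      rw [hexpand]
      have hz : frobSq (0 : Matrix (Fin K) (Fin d) ℝ) = 0 := by simp [frobSq]
      have hz' : frobSq (0 : Matrix (Fin d) (Fin K × Fin n) ℝ) = 0 := by simp [frobSq]
      have hRR0 : ∀ k (p : Fin K × Fin n),
          RR 0 0 (fun _ => 1/(K:ℝ)) k p = -(P K k p.1) := by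
        intro k p
        simp only [hRRdef, Matrix.zero_apply, zero_mul, Finset.sum_const_zero, zero_add]
        rw [hYP]
        ring
      have hS : SS 0 0 (fun _ => 1/(K:ℝ)) = N1 := by
        simp only [hSSdef]
        rw [Finset.sum_congr rfl fun k _ => Finset.sum_congr rfl fun p _ =>
          (by rw [hRR0 k p] : RR 0 0 (fun _ => 1/(K:ℝ)) k p ^ 2 = (-(P K k p.1))^2)]
        simp only [neg_sq]
        rw [sum_P_prod_sq hK0', hN1def]
      rw [hS, hz, hz']
      ring
    have hmain := hexpand W H b
    have hcs := hcsfit W H b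
    have hreg := hregT W H
    have hfin : 2*(K:ℝ)*(n:ℝ)*N1 * g 0 0 (fun _ => 1/(K:ℝ)) ≤ 2*(K:ℝ)*(n:ℝ)*N1 * g W H b := by
      rw [hval]
      rw [hmain]
      rcases le_or_gt 0 (Th W H) with ht|ht
      · have h5 := mul_le_mul_of_nonneg_left hreg hN1.le
        linarith [hcs, h5, sq_nonneg (Th W H),
          mul_nonneg (mul_nonneg hN1.le ht) (sub_nonneg.mpr hc1.le)]
      · have hRnn : (0:ℝ) ≤ (K:ℝ)*(n:ℝ)*N1*(lW * frobSq W + lH * frobSq H) :=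
          mul_nonneg (by positivity)
            (add_nonneg (mul_nonneg hlW.le hA0) (mul_nonneg hlH.le hB0))
        linarith [hcs, hRnn, sq_nonneg (Th W H), mul_pos hN1 (neg_pos.mpr ht)]
    exact le_of_mul_le_mul_left hfin h2KnN1
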